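/- arXiv:1010.2787 — 2 statements merged into one kernel-verified Lean document; each statement's English description precedes it below -/
import Mathlib

section
/- Let σ^2 > 0 and let X, Y, I be nonnegative real random variables on a common probability space with X and Y identically distributed, E[log_2(1 + X/σ^2)] finite, and E[I] finite. Then E[log_2(1 + X/σ^2)] − E[log_2(1 + Y/(I + σ^2))] ≤ log_2(1 + E[I]/σ^2). -/
open MeasureTheory ProbabilityTheory

/-- Single-stream rate-loss bound: if `X, Y, I` are nonnegative random variables with `X` and
`Y` identically distributed, `E[log₂(1 + X/σ²)]` finite and `E[I]` finite, then
`E[log₂(1 + X/σ²)] − E[log₂(1 + Y/(I + σ²))] ≤ log₂(1 + E[I]/σ²)`. -/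
theorem stmt_6 {Ω : Type*} [MeasurableSpace Ω] (μ : Measure Ω) [IsProbabilityMeasure μ]
    (σ2 : ℝ) (hσ2 : 0 < σ2)
    (X Y I : Ω → ℝ)
    (hXmeas : Measurable X) (hYmeas : Measurable Y) (hImeas : Measurable I)
    (hXpos : ∀ᵐ ω ∂μ, 0 ≤ X ω) (hYpos : ∀ᵐ ω ∂μ, 0 ≤ Y ω) (hIpos : ∀ᵐ ω ∂μ, 0 ≤ I ω)
    (hXY : IdentDistrib X Y μ μ)
    (hint1 : Integrable (fun ω => Real.logb 2 (1 + X ω / σ2)) μ)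
    (hint2 : Integrable I μ) :
    (∫ ω, Real.logb 2 (1 + X ω / σ2) ∂μ)
        - ∫ ω, Real.logb 2 (1 + Y ω / (I ω + σ2)) ∂μ
      ≤ Real.logb 2 (1 + (∫ ω, I ω ∂μ) / σ2) := by
  have hlog2 : (0:ℝ) < Real.log 2 := Real.log_pos one_lt_two
  set f : ℝ → ℝ := fun t => Real.logb 2 (1 + t / σ2) with hfdef
  have hfm : Measurable f := by
    simp only [hfdef, Real.logb]
    exact (Real.measurable_log.comp (measurable_const.add
      (measurable_id.div_const σ2))).div_const _
  have hfy : IdentDistrib (fun ω => f (X ω)) (fun ω => f (Y ω)) μ μ := hXY.comp hfm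
  have hintY : Integrable (fun ω => f (Y ω)) μ := (hfy.integrable_iff).mp hint1
  have hEq : (∫ ω, Real.logb 2 (1 + X ω / σ2) ∂μ) = ∫ ω, f (Y ω) ∂μ := hfy.integral_eq
  -- the mixed term
  set g : Ω → ℝ := fun ω => Real.logb 2 (1 + Y ω / (I ω + σ2)) with hgdef
  have hgm : Measurable g := by
    simp only [hgdef, Real.logb]
    exact (Real.measurable_log.comp (measurable_const.add
      (hYmeas.div (hImeas.add measurable_const)))).div_const _
  have hg_bound : ∀ᵐ ω ∂μ, 0 ≤ g ω ∧ g ω ≤ f (Y ω) := by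
    filter_upwards [hYpos, hIpos] with ω hY hI
    have hIσ : 0 < I ω + σ2 := by linarith
    have h1 : (1:ℝ) ≤ 1 + Y ω / (I ω + σ2) :=
      le_add_of_nonneg_right (div_nonneg hY hIσ.le)
    refine ⟨Real.logb_nonneg one_lt_two h1, ?_⟩
    simp only [hgdef, hfdef]
    apply Real.logb_le_logb_of_le one_lt_two (by linarith)
    have : Y ω / (I ω + σ2) ≤ Y ω / σ2 :=
      div_le_div_of_nonneg_left hY hσ2 (by linarith)
    linarith
  have hg_int : Integrable g μ := by
    refine Integrable.mono hintY hgm.aestronglyMeasurable ?_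
    filter_upwards [hg_bound, hYpos] with ω ⟨h0, h1⟩ hY
    rw [Real.norm_eq_abs, Real.norm_eq_abs, abs_of_nonneg h0,
      abs_of_nonneg (h0.trans h1)]
    exact h1
  -- interference term
  set h : Ω → ℝ := fun ω => Real.logb 2 (1 + I ω / σ2) with hhdef
  have hhm : Measurable h := by
    simp only [hhdef, Real.logb]
    exact (Real.measurable_log.comp (measurable_const.add
      (hImeas.div_const σ2))).div_const _
  have hh_bound : ∀ᵐ ω ∂μ, 0 ≤ h ω ∧ h ω ≤ I ω / σ2 / Real.log 2 := by
    filter_upwards [hIpos] with ω hI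
    have h1 : (1:ℝ) ≤ 1 + I ω / σ2 := le_add_of_nonneg_right (div_nonneg hI hσ2.le)
    refine ⟨Real.logb_nonneg one_lt_two h1, ?_⟩
    simp only [hhdef, Real.logb]
    gcongr
    have := Real.log_le_sub_one_of_pos (x := 1 + I ω / σ2) (by linarith)
    linarith
  have hh_int : Integrable h μ := by
    refine Integrable.mono ((hint2.div_const σ2).div_const (Real.log 2))
      hhm.aestronglyMeasurable ?_
    filter_upwards [hh_bound, hIpos] with ω ⟨h0, h1⟩ hI
    rw [Real.norm_eq_abs, Real.norm_eq_abs, abs_of_nonneg h0]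
    exact h1.trans (le_abs_self _)
  -- pointwise key inequality
  have hkey : ∀ᵐ ω ∂μ, f (Y ω) - g ω ≤ h ω := by
    filter_upwards [hYpos, hIpos] with ω hY hI
    have hIσ : 0 < I ω + σ2 := by linarith
    simp only [hfdef, hgdef, hhdef]
    have hp1 : (0:ℝ) < 1 + Y ω / (I ω + σ2) := by positivity
    have hp2 : (0:ℝ) < 1 + I ω / σ2 := by positivity
    have hp3 : (0:ℝ) < 1 + Y ω / σ2 := by positivity
    have hmul : 1 + Y ω / σ2 ≤ (1 + Y ω / (I ω + σ2)) * (1 + I ω / σ2) := by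
      have e1 : 1 + Y ω / σ2 = (Y ω + σ2) / σ2 := by field_simp; ring
      have e2 : (1 + Y ω / (I ω + σ2)) * (1 + I ω / σ2)
          = (Y ω + I ω + σ2) / σ2 := by field_simp; ring
      rw [e1, e2]
      gcongr
      linarith
    have hlogs : Real.logb 2 (1 + Y ω / σ2)
        ≤ Real.logb 2 (1 + Y ω / (I ω + σ2)) + Real.logb 2 (1 + I ω / σ2) := by
      rw [← Real.logb_mul (ne_of_gt hp1) (ne_of_gt hp2)]
      exact Real.logb_le_logb_of_le one_lt_two hp3 hmul
    linarith
  -- conclude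
  rw [hEq]
  have step1 : (∫ ω, f (Y ω) ∂μ) - (∫ ω, g ω ∂μ) ≤ ∫ ω, h ω ∂μ := by
    rw [← integral_sub hintY hg_int]
    exact integral_mono_ae (hintY.sub hg_int) hh_int hkey
  refine step1.trans ?_
  -- Jensen via tangent line: E[logb(1 + I/σ²)] ≤ logb(1 + E[I]/σ²)
  set m := ∫ ω, I ω ∂μ with hm
  have hm0 : 0 ≤ m := integral_nonneg_of_ae hIpos
  have hc : (0:ℝ) < 1 + m / σ2 := by positivity
  have htangent : ∀ᵐ ω ∂μ, h ω ≤
      (Real.log (1 + m / σ2) + (1 + I ω / σ2) / (1 + m / σ2) - 1) / Real.log 2 := by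
    filter_upwards [hIpos] with ω hI
    have hp : (0:ℝ) < 1 + I ω / σ2 := by positivity
    have hq : (0:ℝ) < (1 + I ω / σ2) / (1 + m / σ2) := by positivity
    have h2 := Real.log_le_sub_one_of_pos hq
    rw [Real.log_div (ne_of_gt hp) (ne_of_gt hc)] at h2
    simp only [hhdef, Real.logb]
    gcongr
    linarith
  have hbint : Integrable (fun ω =>
      (Real.log (1 + m / σ2) + (1 + I ω / σ2) / (1 + m / σ2) - 1) / Real.log 2) μ := by
    apply Integrable.div_const
    apply Integrable.sub _ (integrable_const 1)
    exact (integrable_const _).add (((integrable_const 1).add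
      (hint2.div_const σ2)).div_const _)
  have hfun : (fun ω => (Real.log (1 + m / σ2) + (1 + I ω / σ2) / (1 + m / σ2) - 1)
        / Real.log 2)
      = fun ω => (Real.log (1 + m / σ2) + 1 / (1 + m / σ2) - 1) / Real.log 2
        + I ω * (1 / (σ2 * (1 + m / σ2) * Real.log 2)) := by
    funext ω
    field_simp
    ring
  have hstep2 : (∫ ω, h ω ∂μ) ≤ Real.logb 2 (1 + m / σ2) := by
    calc (∫ ω, h ω ∂μ)
        ≤ ∫ ω, (Real.log (1 + m / σ2) + (1 + I ω / σ2) / (1 + m / σ2) - 1) / Real.log 2 ∂μ :=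
          integral_mono_ae hh_int hbint htangent
      _ = Real.logb 2 (1 + m / σ2) := by
          rw [hfun, integral_add (integrable_const _) (hint2.mul_const _),
            integral_const, integral_mul_const, probReal_univ,
            one_smul, ← hm]
          simp only [Real.logb]
          field_simp
          ring
  exact hstep2
end

section
/- (Theorem 1, abstract form.) Let K be a positive integer, d_1, ..., d_K positive integers, σ^2 > 0, P > 0, P_f > 0, α > 0 with P = α P_f, and c ≥ 0. On a common probability space, for each user i ∈ {1,...,K} and each stream m ∈ {1,...,d_i}, let S_{i,m} and Ŝ_{i,m} be identically distributed nonnegative random variables with E[log_2(1 + (P/d_i) S_{i,m}/σ^2)] finite, and let the interference be I_{i,m} = Σ_{(k,ℓ) ≠ (i,m)} (P/d_k) J^{i,m}_{k,ℓ}, where the sum runs over k ∈ {1,...,K}, ℓ ∈ {1,...,d_k}, (k,ℓ) ≠ (i,m), and each J^{i,m}_{k,ℓ} is a nonnegative random variable with E[J^{i,m}_{k,ℓ}] ≤ c σ^2 / P_f. Then the sum-rate loss ΔR = Σ_{i=1}^K Σ_{m=1}^{d_i} ( E[log_2(1 + (P/d_i) S_{i,m}/σ^2)] − E[log_2(1 +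 (P/d_i) Ŝ_{i,m}/(I_{i,m} + σ^2))] ) satisfies ΔR ≤ Σ_{i=1}^K d_i log_2(1 + α c (K − 1/d_i)). In particular, for fixed α and c the loss is bounded by a constant independent of P. -/
open MeasureTheory ProbabilityTheory

set_option maxHeartbeats 1000000

private lemma aux_logb_split (σ2 x I : ℝ) (hσ2 : 0 < σ2) (hx : 0 ≤ x) (hI : 0 ≤ I) :
    Real.logb 2 (1 + x / σ2)
      ≤ Real.logb 2 (1 + x / (I + σ2)) + Real.logb 2 (1 + I / σ2) := by
  have hIσ : 0 < I + σ2 := by linarith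
  have hb : 0 < 1 + x / (I + σ2) := by positivity
  have hcpos : 0 < 1 + I / σ2 := by positivity
  rw [← Real.logb_mul hb.ne' hcpos.ne']
  apply Real.logb_le_logb_of_le one_lt_two (by positivity)
  have key : (1 + x / (I + σ2)) * (1 + I / σ2) = 1 + x / σ2 + I / σ2 := by
    field_simp; ring
  rw [key]
  have : 0 ≤ I / σ2 := by positivity
  linarith

private lemma aux_concave (σ2 : ℝ) (hσ2 : 0 < σ2) :
    ConcaveOn ℝ (Set.Ici 0) (fun x : ℝ => Real.logb 2 (1 + x / σ2)) := by
  have hlog : ConcaveOn ℝ (Set.Ioi 0) Real.log := strictConcaveOn_log_Ioi.concaveOn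
  set A : ℝ →ᵃ[ℝ] ℝ := AffineMap.lineMap (1 : ℝ) (1 + σ2⁻¹) with hA
  have hAx : ∀ x : ℝ, A x = 1 + x / σ2 := by
    intro x
    simp [hA, AffineMap.lineMap_apply, div_eq_mul_inv, mul_comm]
    ring
  have h1 : ConcaveOn ℝ (A ⁻¹' Set.Ioi 0) (Real.log ∘ A) := hlog.comp_affineMap A
  have h2 : ConcaveOn ℝ (Set.Ici 0) (Real.log ∘ A) := by
    apply h1.subset _ (convex_Ici 0)
    intro x hx
    simp only [Set.mem_preimage, hAx, Set.mem_Ioi]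
    have hx' : (0 : ℝ) ≤ x := hx
    positivity
  have h3 : ConcaveOn ℝ (Set.Ici 0) (fun x : ℝ => (Real.log 2)⁻¹ • Real.log (A x)) :=
    h2.smul (by positivity)
  have heq : (fun x : ℝ => Real.logb 2 (1 + x / σ2))
      = fun x : ℝ => (Real.log 2)⁻¹ • Real.log (A x) := by
    funext x
    rw [hAx, Real.logb, div_eq_inv_mul, smul_eq_mul]
  rw [heq]
  exact h3

private lemma aux_jensen_logb {Ω : Type*} [MeasurableSpace Ω] (μ : Measure Ω)
    [IsProbabilityMeasure μ] {σ2 : ℝ} (hσ2 : 0 < σ2) {f : Ω → ℝ}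
    (hfi : Integrable f μ) (hfpos : ∀ᵐ ω ∂μ, 0 ≤ f ω)
    (hgi : Integrable (fun ω => Real.logb 2 (1 + f ω / σ2)) μ) :
    ∫ ω, Real.logb 2 (1 + f ω / σ2) ∂μ ≤ Real.logb 2 (1 + (∫ ω, f ω ∂μ) / σ2) := by
  have hconc := aux_concave σ2 hσ2
  have hcont : ContinuousOn (fun x : ℝ => Real.logb 2 (1 + x / σ2)) (Set.Ici 0) := by
    simp only [Real.logb]
    apply ContinuousOn.div_const
    apply ContinuousOn.log
    · exact (continuous_const.add (continuous_id.div_const σ2)).continuousOn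
    · intro x hx
      have hx' : (0 : ℝ) ≤ x := hx
      positivity
  have hfs : ∀ᵐ ω ∂μ, f ω ∈ Set.Ici (0 : ℝ) := hfpos
  exact hconc.le_map_integral hcont isClosed_Ici hfs hfi hgi

private lemma aux_meas_logb {Ω : Type*} [MeasurableSpace Ω] {f : Ω → ℝ}
    (hf : Measurable f) : Measurable (fun ω => Real.logb 2 (f ω)) := by
  simp only [Real.logb]
  exact hf.log.div_const _

/-- Theorem 1 of the paper, abstract form. Streams are indexed by pairs `s = (i, m)` with
`i ∈ {1,…,K}` and `m ∈ {1,…,d i}`. `S s` and `Shat s` are the identically distributed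
perfect- and imperfect-CSI desired signal powers, and the interference at stream `s` is
`I s = Σ_{p ≠ s} (P / d_{p.1}) J s p` with `E[J s p] ≤ c σ² / P_f`. If `P = α P_f` then the
sum-rate loss is at most `Σ_i d_i log₂(1 + α c (K − 1/d_i))`, a constant independent of `P`. -/
theorem stmt_9 {Ω : Type*} [MeasurableSpace Ω] (μ : Measure Ω) [IsProbabilityMeasure μ]
    (K : ℕ) (hK : 0 < K) (d : Fin K → ℕ) (hd : ∀ i, 0 < d i)
    (σ2 P Pf α c : ℝ) (hσ2 : 0 < σ2) (hP : 0 < P) (hPf : 0 < Pf) (hα : 0 < α)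
    (hPα : P = α * Pf) (hc : 0 ≤ c)
    (S Shat : (Σ i : Fin K, Fin (d i)) → Ω → ℝ)
    (J : (Σ i : Fin K, Fin (d i)) → (Σ i : Fin K, Fin (d i)) → Ω → ℝ)
    (hSmeas : ∀ s, Measurable (S s)) (hShatmeas : ∀ s, Measurable (Shat s))
    (hJmeas : ∀ s p, Measurable (J s p))
    (hSpos : ∀ s, ∀ᵐ ω ∂μ, 0 ≤ S s ω) (hShatpos : ∀ s, ∀ᵐ ω ∂μ, 0 ≤ Shat s ω)
    (hident : ∀ s, IdentDistrib (S s) (Shat s) μ μ)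
    (hSint : ∀ s, Integrable (fun ω => Real.logb 2 (1 + (P / d s.1) * S s ω / σ2)) μ)
    (hJpos : ∀ s p, ∀ᵐ ω ∂μ, 0 ≤ J s p ω)
    (hJint : ∀ s p, Integrable (J s p) μ)
    (hJmean : ∀ s p, ∫ ω, J s p ω ∂μ ≤ c * σ2 / Pf) :
    ∑ s : Σ i : Fin K, Fin (d i),
      ((∫ ω, Real.logb 2 (1 + (P / d s.1) * S s ω / σ2) ∂μ)
        - ∫ ω, Real.logb 2 (1 + (P / d s.1) * Shat s ω
            / ((∑ p ∈ Finset.univ.erase s, (P / d p.1) * J s p ω) + σ2)) ∂μ)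
      ≤ ∑ i : Fin K, (d i : ℝ) * Real.logb 2 (1 + α * c * (K - 1 / d i)) := by
  have hlog2 : (0 : ℝ) < Real.log 2 := Real.log_pos one_lt_two
  -- per-stream bound
  have key : ∀ s : Σ i : Fin K, Fin (d i),
      ((∫ ω, Real.logb 2 (1 + (P / d s.1) * S s ω / σ2) ∂μ)
        - ∫ ω, Real.logb 2 (1 + (P / d s.1) * Shat s ω
            / ((∑ p ∈ Finset.univ.erase s, (P / d p.1) * J s p ω) + σ2)) ∂μ)
      ≤ Real.logb 2 (1 + α * c * (K - 1 / d s.1)) := by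
    intro s
    have hds : (0 : ℝ) < d s.1 := by exact_mod_cast hd s.1
    set a : ℝ := P / d s.1 with ha
    have hapos : 0 < a := by positivity
    set I : Ω → ℝ := fun ω => ∑ p ∈ Finset.univ.erase s, (P / d p.1) * J s p ω with hI
    have hImeas : Measurable I := by
      apply Finset.measurable_sum
      intro p _
      exact (hJmeas s p).const_mul _
    have hIint : Integrable I μ := by
      apply integrable_finset_sum
      intro p _
      exact (hJint s p).const_mul _
    have hIpos : ∀ᵐ ω ∂μ, 0 ≤ I ω := by
      have h := (MeasureTheory.ae_all_iff.2 fun p : Σ i : Fin K, Fin (d i) => hJpos s p)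
      filter_upwards [h] with ω hω
      apply Finset.sum_nonneg
      intro p _
      have hdp : (0 : ℝ) < d p.1 := by exact_mod_cast hd p.1
      have := hω p
      positivity
    -- the function g
    set g : ℝ → ℝ := fun x => Real.logb 2 (1 + a * x / σ2) with hg
    have hgmeas : Measurable g := by
      apply aux_meas_logb
      exact (measurable_id.const_mul a |>.div_const σ2).const_add 1
    -- step A : equal first integrals under S and Shat
    have hidg : IdentDistrib (fun ω => g (S s ω)) (fun ω => g (Shat s ω)) μ μ :=
      (hident s).comp hgmeas
    have hA : ∫ ω, Real.logb 2 (1 + a * S s ω / σ2) ∂μ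
        = ∫ ω, Real.logb 2 (1 + a * Shat s ω / σ2) ∂μ := hidg.integral_eq
    have hgShat_int : Integrable (fun ω => Real.logb 2 (1 + a * Shat s ω / σ2)) μ := by
      have := (hident s).comp hgmeas |>.integrable_iff.1 (hSint s)
      exact this
    -- second integrand
    set f2 : Ω → ℝ := fun ω => Real.logb 2 (1 + a * Shat s ω / (I ω + σ2)) with hf2
    have hf2meas : Measurable f2 := by
      apply aux_meas_logb
      exact (((hShatmeas s).const_mul a).div (hImeas.add_const σ2)).const_add 1
    have hf2bound : ∀ᵐ ω ∂μ, 0 ≤ f2 ω ∧ f2 ω ≤ Real.logb 2 (1 + a * Shat s ω / σ2) := by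
      filter_upwards [hIpos, hShatpos s] with ω hIω hSω
      have hIσ : 0 < I ω + σ2 := by linarith
      have hnum : 0 ≤ a * Shat s ω := by positivity
      constructor
      · apply Real.logb_nonneg one_lt_two
        have : 0 ≤ a * Shat s ω / (I ω + σ2) := by positivity
        linarith
      · apply Real.logb_le_logb_of_le one_lt_two (by positivity)
        have hle : a * Shat s ω / (I ω + σ2) ≤ a * Shat s ω / σ2 := by
          gcongr
          · linarith
        linarith
    have hf2int : Integrable f2 μ := by
      apply hgShat_int.mono' hf2meas.aestronglyMeasurable
      filter_upwards [hf2bound] with ω hω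
      rw [Real.norm_eq_abs, abs_of_nonneg hω.1]
      exact hω.2
    -- interference log term
    set h3 : Ω → ℝ := fun ω => Real.logb 2 (1 + I ω / σ2) with hh3
    have hh3meas : Measurable h3 := by
      apply aux_meas_logb
      exact (hImeas.div_const σ2).const_add 1
    have hh3int : Integrable h3 μ := by
      apply Integrable.mono' ((hIint.div_const σ2).div_const (Real.log 2))
        hh3meas.aestronglyMeasurable
      filter_upwards [hIpos] with ω hIω
      have h1 : 0 ≤ h3 ω := by
        apply Real.logb_nonneg one_lt_two
        have : 0 ≤ I ω / σ2 := by positivity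
        linarith
      rw [Real.norm_eq_abs, abs_of_nonneg h1]
      have hxx : 0 ≤ I ω / σ2 := by positivity
      have hlog : Real.log (1 + I ω / σ2) ≤ I ω / σ2 := by
        have := Real.log_le_sub_one_of_pos (x := 1 + I ω / σ2) (by linarith)
        linarith
      show Real.log (1 + I ω / σ2) / Real.log 2 ≤ I ω / σ2 / Real.log 2
      exact (div_le_div_iff_of_pos_right hlog2).mpr hlog
    -- pointwise split inequality
    have hsplit : ∀ᵐ ω ∂μ, Real.logb 2 (1 + a * Shat s ω / σ2) - f2 ω ≤ h3 ω := by
      filter_upwards [hIpos, hShatpos s] with ω hIω hSω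
      have hnum : 0 ≤ a * Shat s ω := by positivity
      have := aux_logb_split σ2 (a * Shat s ω) (I ω) hσ2 hnum hIω
      simp only [hf2, hh3]
      linarith
    -- integrate
    have hB : (∫ ω, Real.logb 2 (1 + a * Shat s ω / σ2) ∂μ) - (∫ ω, f2 ω ∂μ)
        ≤ ∫ ω, h3 ω ∂μ := by
      rw [← integral_sub hgShat_int hf2int]
      exact integral_mono_ae (hgShat_int.sub hf2int) hh3int hsplit
    -- Jensen
    have hC : ∫ ω, h3 ω ∂μ ≤ Real.logb 2 (1 + (∫ ω, I ω ∂μ) / σ2) :=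
      aux_jensen_logb μ hσ2 hIint hIpos hh3int
    -- mean of interference
    have hImean_nonneg : 0 ≤ ∫ ω, I ω ∂μ := integral_nonneg_of_ae hIpos
    have hImean : ∫ ω, I ω ∂μ ≤ α * c * σ2 * (K - 1 / d s.1) := by
      have hIval : ∫ ω, I ω ∂μ = ∑ p ∈ Finset.univ.erase s, (P / d p.1) * ∫ ω, J s p ω ∂μ := by
        rw [integral_finset_sum _ (fun p _ => (hJint s p).const_mul _)]
        exact Finset.sum_congr rfl fun p _ => integral_const_mul _ _
      rw [hIval]
      have hstep : ∑ p ∈ Finset.univ.erase s, (P / d p.1) * ∫ ω, J s p ω ∂μ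
          ≤ ∑ p ∈ Finset.univ.erase s, (P / d p.1) * (c * σ2 / Pf) := by
        apply Finset.sum_le_sum
        intro p _
        have hdp : (0 : ℝ) < d p.1 := by exact_mod_cast hd p.1
        have : (0 : ℝ) ≤ P / d p.1 := by positivity
        exact mul_le_mul_of_nonneg_left (hJmean s p) this
      refine hstep.trans ?_
      have hsum : ∑ p ∈ Finset.univ.erase s, (P / (d p.1 : ℝ)) * (c * σ2 / Pf)
          = (P * (c * σ2 / Pf)) * ∑ p ∈ Finset.univ.erase s, (1 / (d p.1 : ℝ)) := by
        rw [Finset.mul_sum]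
        apply Finset.sum_congr rfl
        intro p _
        field_simp
      rw [hsum]
      have hcount : ∑ p ∈ Finset.univ.erase s, (1 / (d p.1 : ℝ)) = K - 1 / d s.1 := by
        have htot : ∑ p : Σ i : Fin K, Fin (d i), (1 / (d p.1 : ℝ)) = K := by
          rw [← Finset.univ_sigma_univ, Finset.sum_sigma]
          have : ∀ i : Fin K, ∑ _m : Fin (d i), (1 / (d i : ℝ)) = 1 := by
            intro i
            have hdi : (0 : ℝ) < d i := by exact_mod_cast hd i
            rw [Finset.sum_const, Finset.card_univ, Fintype.card_fin, nsmul_eq_mul]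
            field_simp
          rw [Finset.sum_congr rfl fun i _ => this i]
          simp
        have := Finset.sum_erase_add Finset.univ (fun p : Σ i : Fin K, Fin (d i) =>
          (1 / (d p.1 : ℝ))) (Finset.mem_univ s)
        rw [htot] at this
        linarith
      rw [hcount]
      have heq : P * (c * σ2 / Pf) = α * c * σ2 := by
        rw [hPα]
        field_simp
      rw [heq]
    -- final logb comparison
    have hD : Real.logb 2 (1 + (∫ ω, I ω ∂μ) / σ2)
        ≤ Real.logb 2 (1 + α * c * (K - 1 / d s.1)) := by
      apply Real.logb_le_logb_of_le one_lt_two (by positivity)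
      have : (∫ ω, I ω ∂μ) / σ2 ≤ α * c * (K - 1 / d s.1) := by
        rw [div_le_iff₀ hσ2]
        calc ∫ ω, I ω ∂μ ≤ α * c * σ2 * (K - 1 / d s.1) := hImean
          _ = α * c * (K - 1 / d s.1) * σ2 := by ring
      linarith
    calc (∫ ω, Real.logb 2 (1 + a * S s ω / σ2) ∂μ) - ∫ ω, f2 ω ∂μ
        = (∫ ω, Real.logb 2 (1 + a * Shat s ω / σ2) ∂μ) - ∫ ω, f2 ω ∂μ := by rw [hA]
      _ ≤ ∫ ω, h3 ω ∂μ := hB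
      _ ≤ Real.logb 2 (1 + (∫ ω, I ω ∂μ) / σ2) := hC
      _ ≤ Real.logb 2 (1 + α * c * (K - 1 / d s.1)) := hD
  calc ∑ s : Σ i : Fin K, Fin (d i),
      ((∫ ω, Real.logb 2 (1 + (P / d s.1) * S s ω / σ2) ∂μ)
        - ∫ ω, Real.logb 2 (1 + (P / d s.1) * Shat s ω
            / ((∑ p ∈ Finset.univ.erase s, (P / d p.1) * J s p ω) + σ2)) ∂μ)
      ≤ ∑ s : Σ i : Fin K, Fin (d i), Real.logb 2 (1 + α * c * (K - 1 / d s.1)) :=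
        Finset.sum_le_sum fun s _ => key s
    _ = ∑ i : Fin K, (d i : ℝ) * Real.logb 2 (1 + α * c * (K - 1 / d i)) := by
        rw [← Finset.univ_sigma_univ, Finset.sum_sigma]
        apply Finset.sum_congr rfl
        intro i _
        simp [Finset.sum_const, Finset.card_univ, Fintype.card_fin, nsmul_eq_mul]
end
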